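/- Let g be a real Lie algebra with a complex structure J (an endomorphism with J² = -Id satisfying the integrability condition J[x,y] - [Jx,y] - [x,Jy] - J[Jx,Jy] = 0). If J is abelian, i.e. [Jx,Jy] = [x,y] for all x,y, then the commutator ideal [g,g] is abelian; in particular g is 2-step solvable. -/
import Mathlib

set_option linter.unusedSectionVars false
set_option maxHeartbeats 1000000

section Aux

variable {L : Type*} [LieRing L] [LieAlgebra ℝ L]

/-- Bracket on the "complexification" `L × L` (pair `(x, y)` represents `x + i y`). -/
private def acsBB (x y : L × L) : L × L :=
  (⁅x.1, y.1⁆ - ⁅x.2, y.2⁆, ⁅x.1, y.2⁆ + ⁅x.2, y.1⁆)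

private theorem acsBB_add_left (x x' y : L × L) :
    acsBB (x + x') y = acsBB x y + acsBB x' y := by
  simp only [acsBB, Prod.mk_add_mk, Prod.fst_add, Prod.snd_add, add_lie, Prod.mk.injEq]
  constructor <;> abel

private theorem acsBB_add_right (x y y' : L × L) :
    acsBB x (y + y') = acsBB x y + acsBB x y' := by
  simp only [acsBB, Prod.mk_add_mk, Prod.fst_add, Prod.snd_add, lie_add, Prod.mk.injEq]
  constructor <;> abel

private theorem acsBB_skew (x y : L × L) : acsBB x y = -acsBB y x := by
  simp only [acsBB, Prod.neg_mk, Prod.mk.injEq, neg_sub, neg_add]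
  constructor
  · rw [← lie_skew y.1 x.1, ← lie_skew y.2 x.2]; abel
  · rw [← lie_skew y.1 x.2, ← lie_skew y.2 x.1]; abel

private theorem acsBB_zero_right (x : L × L) : acsBB x 0 = 0 := by
  simp [acsBB]

private theorem acsBB_zero_left (y : L × L) : acsBB 0 y = 0 := by
  simp [acsBB]

private theorem acsBB_neg_right (x y : L × L) : acsBB x (-y) = -acsBB x y := by
  have h := acsBB_add_right x y (-y)
  rw [add_neg_cancel, acsBB_zero_right] at h
  exact eq_neg_of_add_eq_zero_right h.symm

private theorem acsBB_neg_left (x y : L × L) : acsBB (-x) y = -acsBB x y := by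
  rw [acsBB_skew (-x) y, acsBB_neg_right, acsBB_skew y x]
  abel

private theorem acsBB_lie_lie (x y z : L × L) :
    acsBB (acsBB x y) z = acsBB x (acsBB y z) - acsBB y (acsBB x z) := by
  simp only [acsBB, Prod.mk_sub_mk, Prod.mk.injEq, sub_lie, lie_sub, add_lie, lie_add,
    lie_lie]
  constructor <;> abel

/-- Leibniz identity for `acsBB`. -/
private theorem acsBB_leib (x y z : L × L) :
    acsBB (acsBB x y) z = acsBB (acsBB x z) y + acsBB x (acsBB y z) := by
  rw [acsBB_lie_lie x z y, acsBB_skew z y, acsBB_neg_right, acsBB_skew z (acsBB x y)]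
  abel

/-- Expansion of a bracket against a bracket (Leibniz from the right). -/
private theorem acsBB_exp (X y z : L × L) :
    acsBB X (acsBB y z) = acsBB (acsBB X y) z + acsBB y (acsBB X z) := by
  rw [acsBB_lie_lie X y z]
  abel

/-- `(1+iJ)/2`-projection: the `A`-part of an element of the complexification. -/
private noncomputable def acsQA (J : L →ₗ[ℝ] L) (w : L × L) : L × L :=
  ((1 / 2 : ℝ) • (w.1 + J w.2), (1 / 2 : ℝ) • (w.2 - J w.1))

/-- The `B`-part. -/
private noncomputable def acsQB (J : L →ₗ[ℝ] L) (w : L × L) : L × L :=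
  ((1 / 2 : ℝ) • (w.1 - J w.2), (1 / 2 : ℝ) • (w.2 + J w.1))

private theorem acsQ_dec (J : L →ₗ[ℝ] L) (w : L × L) : acsQA J w + acsQB J w = w := by
  simp only [acsQA, acsQB, Prod.mk_add_mk]
  rw [Prod.ext_iff]
  constructor <;> module

private theorem acsQA_mem (J : L →ₗ[ℝ] L) (hJ2 : ∀ x : L, J (J x) = -x) (w : L × L) :
    (acsQA J w).2 = -(J (acsQA J w).1) := by
  simp only [acsQA, map_smul, map_add, map_sub, hJ2]
  module

private theorem acsQB_mem (J : L →ₗ[ℝ] L) (hJ2 : ∀ x : L, J (J x) = -x) (w : L × L) :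
    (acsQB J w).2 = J (acsQB J w).1 := by
  simp only [acsQB, map_smul, map_add, map_sub, hJ2]
  module

/-- Brackets of two `A`-elements vanish. -/
private theorem acsAA (J : L →ₗ[ℝ] L) (hab : ∀ x y : L, ⁅J x, J y⁆ = ⁅x, y⁆)
    (h1 : ∀ x y : L, ⁅J x, y⁆ = -⁅x, J y⁆)
    (x y : L × L) (hx : x.2 = -(J x.1)) (hy : y.2 = -(J y.1)) : acsBB x y = 0 := by
  simp only [acsBB, hx, hy, Prod.mk_eq_zero, neg_lie, lie_neg, neg_neg, hab, sub_self,
    true_and, h1]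
  abel

/-- Brackets of two `B`-elements vanish. -/
private theorem acsBBzero (J : L →ₗ[ℝ] L) (hab : ∀ x y : L, ⁅J x, J y⁆ = ⁅x, y⁆)
    (h1 : ∀ x y : L, ⁅J x, y⁆ = -⁅x, J y⁆)
    (x y : L × L) (hx : x.2 = J x.1) (hy : y.2 = J y.1) : acsBB x y = 0 := by
  simp only [acsBB, hx, hy, Prod.mk_eq_zero, hab, sub_self, true_and, h1]
  abel

/-- Key lemma: the bracket of two mixed brackets vanishes. -/
private theorem acs_key (J : L →ₗ[ℝ] L) (hJ2 : ∀ x : L, J (J x) = -x)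
    (hab : ∀ x y : L, ⁅J x, J y⁆ = ⁅x, y⁆) (h1 : ∀ x y : L, ⁅J x, y⁆ = -⁅x, J y⁆)
    (α β γ δ : L × L) (hα : α.2 = -(J α.1)) (hβ : β.2 = J β.1)
    (hγ : γ.2 = -(J γ.1)) (hδ : δ.2 = J δ.1) :
    acsBB (acsBB α β) (acsBB γ δ) = 0 := by
  have hAA := acsAA J hab h1
  have hBB := acsBBzero J hab h1
  have hqA := acsQA_mem J hJ2
  have hqB := acsQB_mem J hJ2
  have hdec := acsQ_dec J
  set u := acsBB α β with hu
  set w := acsBB α δ with hw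
  set p := acsBB γ β with hp
  -- step 1: ⁅u, δ⁆ = ⁅w, β⁆
  have step1 : acsBB u δ = acsBB w β := by
    rw [hu, acsBB_leib α β δ, hBB β δ hβ hδ, acsBB_zero_right, add_zero, ← hw]
  -- step 2: ⁅u, γ⁆ = -⁅α, p⁆
  have step2 : acsBB u γ = -(acsBB α p) := by
    rw [hu, acsBB_leib α β γ, hAA α γ hα hγ, acsBB_zero_left, zero_add,
      acsBB_skew β γ, acsBB_neg_right, ← hp]
  -- A-part of u against δ
  have hA2 : acsBB (acsQA J u) δ = acsBB (acsQA J w) β := by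
    have l : acsBB (acsQA J u) δ + acsBB (acsQB J u) δ = acsBB u δ := by
      rw [← acsBB_add_left, hdec u]
    rw [hBB _ _ (hqB u) hδ, add_zero] at l
    have r : acsBB (acsQA J w) β + acsBB (acsQB J w) β = acsBB w β := by
      rw [← acsBB_add_left, hdec w]
    rw [hBB _ _ (hqB w) hβ, add_zero] at r
    rw [l, step1, ← r]
  have hSA : acsBB (acsQA J u) (acsBB γ δ) = acsBB (acsQA J w) p := by
    rw [acsBB_exp, hAA _ _ (hqA u) hγ, acsBB_zero_left, zero_add, hA2,
      acsBB_skew γ (acsBB (acsQA J w) β), acsBB_leib (acsQA J w) β γ,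
      hAA _ _ (hqA w) hγ, acsBB_zero_left, zero_add, acsBB_skew β γ,
      acsBB_neg_right, ← hp, neg_neg]
  -- B-part of u against γ
  have hB2 : acsBB (acsQB J u) γ = -(acsBB α (acsQB J p)) := by
    have l : acsBB (acsQA J u) γ + acsBB (acsQB J u) γ = acsBB u γ := by
      rw [← acsBB_add_left, hdec u]
    rw [hAA _ _ (hqA u) hγ, zero_add] at l
    have r : acsBB α (acsQA J p) + acsBB α (acsQB J p) = acsBB α p := by
      rw [← acsBB_add_right, hdec p]
    rw [hAA _ _ hα (hqA p), zero_add] at r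
    rw [l, step2, ← r]
  have hSB : acsBB (acsQB J u) (acsBB γ δ) = -(acsBB w (acsQB J p)) := by
    rw [acsBB_exp, hBB _ _ (hqB u) hδ, acsBB_zero_right, add_zero, hB2,
      acsBB_neg_left, acsBB_leib α (acsQB J p) δ, hBB _ _ (hqB p) hδ,
      acsBB_zero_right, add_zero, ← hw]
  -- final combination
  have hfin1 : acsBB (acsQA J w) p = acsBB (acsQA J w) (acsQB J p) := by
    conv_lhs => rw [← hdec p]
    rw [acsBB_add_right, hAA _ _ (hqA w) (hqA p), zero_add]
  have hfin2 : acsBB w (acsQB J p) = acsBB (acsQA J w) (acsQB J p) := by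
    conv_lhs => rw [← hdec w]
    rw [acsBB_add_left, hBB _ _ (hqB w) (hqB p), add_zero]
  calc acsBB u (acsBB γ δ)
      = acsBB (acsQA J u + acsQB J u) (acsBB γ δ) := by rw [hdec u]
    _ = acsBB (acsQA J u) (acsBB γ δ) + acsBB (acsQB J u) (acsBB γ δ) := acsBB_add_left _ _ _
    _ = acsBB (acsQA J w) p - acsBB w (acsQB J p) := by rw [hSA, hSB]; abel
    _ = 0 := by rw [hfin1, hfin2, sub_self]

end Aux

/-- An abelian complex structure on a real Lie algebra forces the
commutator ideal to be abelian; in particular the Lie algebra is 2-step solvable. -/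
theorem abelian_complex_structure_commutator_abelian
    {L : Type*} [LieRing L] [LieAlgebra ℝ L]
    (J : L →ₗ[ℝ] L)
    (hJ2 : ∀ x : L, J (J x) = -x)
    (hint : ∀ x y : L, J ⁅x, y⁆ - ⁅J x, y⁆ - ⁅x, J y⁆ - J ⁅J x, J y⁆ = 0)
    (hab : ∀ x y : L, ⁅J x, J y⁆ = ⁅x, y⁆) :
    (∀ a b c d : L, ⁅⁅a, b⁆, ⁅c, d⁆⁆ = 0) ∧
      LieAlgebra.derivedSeries ℝ L 2 = ⊥ := by
  have h1 : ∀ x y : L, ⁅J x, y⁆ = -⁅x, J y⁆ := by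
    intro x y
    have h := hab x (J y)
    rw [hJ2, lie_neg] at h
    rw [← h, neg_neg]
  have hAA := acsAA J hab h1
  have hBB := acsBBzero J hab h1
  have hqA := acsQA_mem J hJ2
  have hqB := acsQB_mem J hJ2
  have hdec := acsQ_dec J
  -- the main bracket identity
  have goal1 : ∀ a b c d : L, ⁅⁅a, b⁆, ⁅c, d⁆⁆ = 0 := by
    intro a b c d
    have k0 : ∀ x y z t : L,
        acsBB (acsBB (acsQA J ((x : L), (0 : L))) (acsQB J ((y : L), (0 : L))))
          (acsBB (acsQA J ((z : L), (0 : L))) (acsQB J ((t : L), (0 : L)))) = 0 := by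
      intro x y z t
      exact acs_key J hJ2 hab h1 _ _ _ _ (hqA _) (hqB _) (hqA _) (hqB _)
    have expand : ∀ x y : L, acsBB ((x : L), (0 : L)) ((y : L), (0 : L)) =
        acsBB (acsQA J ((x : L), (0 : L))) (acsQB J ((y : L), (0 : L))) +
          acsBB (acsQB J ((x : L), (0 : L))) (acsQA J ((y : L), (0 : L))) := by
      intro x y
      conv_lhs => rw [← hdec ((x : L), (0 : L)), ← hdec ((y : L), (0 : L))]
      rw [acsBB_add_left, acsBB_add_right, acsBB_add_right,
        hAA _ _ (hqA _) (hqA _), hBB _ _ (hqB _) (hqB _), zero_add, add_zero]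
    have flip : ∀ x y : L,
        acsBB (acsQB J ((x : L), (0 : L))) (acsQA J ((y : L), (0 : L))) =
          -acsBB (acsQA J ((y : L), (0 : L))) (acsQB J ((x : L), (0 : L))) :=
      fun x y => acsBB_skew _ _
    have hZ : acsBB (acsBB ((a : L), (0 : L)) ((b : L), (0 : L)))
        (acsBB ((c : L), (0 : L)) ((d : L), (0 : L))) = 0 := by
      rw [expand a b, expand c d, flip a b, flip c d]
      rw [acsBB_add_left, acsBB_add_right, acsBB_add_right, acsBB_neg_left,
        acsBB_neg_right, acsBB_neg_left, acsBB_neg_right, k0, k0, k0, k0]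
      simp
    have e : ∀ x y : L, acsBB ((x : L), (0 : L)) ((y : L), (0 : L)) = (⁅x, y⁆, (0 : L)) := by
      intro x y
      simp [acsBB]
    rw [e, e, e] at hZ
    exact (Prod.mk_eq_zero.mp hZ).1
  refine ⟨goal1, ?_⟩
  -- two-step solvability
  show LieAlgebra.derivedSeriesOfIdeal ℝ L 2 ⊤ = ⊥
  rw [show (2 : ℕ) = 1 + 1 from rfl, LieAlgebra.derivedSeriesOfIdeal_succ,
    LieSubmodule.lie_eq_bot_iff]
  have hspan : LieSubmodule.toSubmodule (LieAlgebra.derivedSeriesOfIdeal ℝ L 1 ⊤) =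
      Submodule.span ℝ {m | ∃ x ∈ (⊤ : LieIdeal ℝ L), ∃ n ∈ (⊤ : LieIdeal ℝ L), ⁅x, n⁆ = m} := by
    rw [show (1 : ℕ) = 0 + 1 from rfl, LieAlgebra.derivedSeriesOfIdeal_succ,
      LieAlgebra.derivedSeriesOfIdeal_zero]
    exact LieSubmodule.lieIdeal_oper_eq_linear_span' ..
  intro x hx m hm
  rw [← LieSubmodule.mem_toSubmodule, hspan] at hx hm
  induction hx using Submodule.span_induction with
  | mem X hX =>
    obtain ⟨a, -, b, -, rfl⟩ := hX
    induction hm using Submodule.span_induction with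
    | mem Y hY =>
      obtain ⟨c, -, d, -, rfl⟩ := hY
      exact goal1 a b c d
    | zero => simp
    | add y z _ _ hy hz => rw [lie_add, hy, hz, add_zero]
    | smul r y _ hy => rw [lie_smul, hy, smul_zero]
  | zero => simp
  | add y z _ _ hy hz => rw [add_lie, hy, hz, add_zero]
  | smul r y _ hy => rw [smul_lie, hy, smul_zero]
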